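/- For all nonnegative real numbers x1, x2, x3, x12, x13, x23 and any real r ≥ 2, the inequality (x1+x2+x3+x12+x13+x23)^r + x1^r + x2^r + x3^r ≥ (x1+x2+x12)^r + (x1+x3+x13)^r + (x2+x3+x23)^r holds. -/

import Mathlib

open Real Set

lemma incr_diff {s : ℝ} (hs : 1 ≤ s) {u v w : ℝ} (hu : 0 ≤ u) (huv : u ≤ v) (hw : 0 ≤ w) :
    (u + w) ^ s + v ^ s ≤ u ^ s + (v + w) ^ s := by
  rcases eq_or_lt_of_le hw with rfl | hw'
  · simp
  have hd : 0 < v + w - u := by linarith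
  set a : ℝ := w / (v + w - u) with ha
  have ha0 : 0 ≤ a := by positivity
  have ha1 : a ≤ 1 := by
    rw [ha, div_le_one hd]; linarith
  have hcx := convexOn_rpow hs
  have h1 : ((1 - a) • u + a • (v + w)) = u + w := by
    rw [ha]; simp only [smul_eq_mul]; linear_combination (div_mul_cancel₀ w hd.ne' : w / (v + w - u) * (v + w - u) = w)
  have h2 : (a • u + (1 - a) • (v + w)) = v := by
    rw [ha]; simp only [smul_eq_mul]; linear_combination (-1 : ℝ) * (div_mul_cancel₀ w hd.ne' : w / (v + w - u) * (v + w - u) = w)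
  have k1 := hcx.2 (mem_Ici.2 hu) (mem_Ici.2 (by linarith : (0:ℝ) ≤ v + w))
    (by linarith : (0:ℝ) ≤ 1 - a) ha0 (by ring)
  have k2 := hcx.2 (mem_Ici.2 hu) (mem_Ici.2 (by linarith : (0:ℝ) ≤ v + w))
    ha0 (by linarith : (0:ℝ) ≤ 1 - a) (by ring)
  rw [h1] at k1
  rw [h2] at k2
  simp only [smul_eq_mul] at k1 k2
  nlinarith [k1, k2]

lemma core_ineq {r : ℝ} (hr : 2 ≤ r) {x y z : ℝ} (hx : 0 ≤ x) (hy : 0 ≤ y) (hz : 0 ≤ z) :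
    (x + y) ^ r + (x + z) ^ r + (y + z) ^ r ≤ (x + y + z) ^ r + x ^ r + y ^ r + z ^ r := by
  have hr1 : (1:ℝ) ≤ r := by linarith
  set F : ℝ → ℝ := fun p => (p + (y + z)) ^ r + p ^ r - (p + y) ^ r - (p + z) ^ r with hF
  have hderiv : ∀ p : ℝ, HasDerivAt F
      (1 * r * (p + (y + z)) ^ (r - 1) + 1 * r * p ^ (r - 1)
        - 1 * r * (p + y) ^ (r - 1) - 1 * r * (p + z) ^ (r - 1)) p := by
    intro p
    exact ((((((hasDerivAt_id p).add_const (y + z)).rpow_const (Or.inr hr1)).add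
        ((hasDerivAt_id p).rpow_const (Or.inr hr1))).sub
        (((hasDerivAt_id p).add_const y).rpow_const (Or.inr hr1))).sub
        (((hasDerivAt_id p).add_const z).rpow_const (Or.inr hr1)))
  have hmono : MonotoneOn F (Ici (0:ℝ)) := by
    apply monotoneOn_of_deriv_nonneg (convex_Ici 0)
    · exact fun p _ => ((hderiv p).differentiableAt).continuousAt.continuousWithinAt
    · exact fun p _ => ((hderiv p).differentiableAt).differentiableWithinAt
    · intro p hp
      rw [interior_Ici] at hp
      rw [(hderiv p).deriv]
      have hp0 : (0:ℝ) ≤ p := le_of_lt hp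
      have key := incr_diff (s := r - 1) (by linarith) (u := p) (v := p + z)
        hp0 (by linarith) hy
      have he : p + z + y = p + (y + z) := by ring
      rw [he] at key
      nlinarith [key]
  have h0 : F 0 ≤ F x := hmono (mem_Ici.2 le_rfl) (mem_Ici.2 hx) hx
  have hF0 : F 0 = (y + z) ^ r - y ^ r - z ^ r := by
    simp [hF, Real.zero_rpow (by linarith : r ≠ 0)]
  have hFx : F x = (x + y + z) ^ r + x ^ r - (x + y) ^ r - (x + z) ^ r := by
    simp only [hF]; ring_nf
  rw [hF0, hFx] at h0
  linarith

theorem stmt_0 (x1 x2 x3 x12 x13 x23 r : ℝ)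
    (h1 : 0 ≤ x1) (h2 : 0 ≤ x2) (h3 : 0 ≤ x3)
    (h12 : 0 ≤ x12) (h13 : 0 ≤ x13) (h23 : 0 ≤ x23) (hr : 2 ≤ r) :
    (x1 + x2 + x12) ^ r + (x1 + x3 + x13) ^ r + (x2 + x3 + x23) ^ r ≤
      (x1 + x2 + x3 + x12 + x13 + x23) ^ r + x1 ^ r + x2 ^ r + x3 ^ r := by
  have hr1 : (1:ℝ) ≤ r := by linarith
  have k1 := incr_diff hr1 (u := x1 + x2) (v := x1 + x2 + x3 + x13 + x23) (w := x12)
    (by linarith) (by linarith) h12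
  have e1 : x1 + x2 + x3 + x13 + x23 + x12 = x1 + x2 + x3 + x12 + x13 + x23 := by ring
  rw [e1] at k1
  have k2 := incr_diff hr1 (u := x1 + x3) (v := x1 + x2 + x3 + x23) (w := x13)
    (by linarith) (by linarith) h13
  have e2 : x1 + x2 + x3 + x23 + x13 = x1 + x2 + x3 + x13 + x23 := by ring
  rw [e2] at k2
  have e3 : x1 + x3 + x13 = x1 + x3 + x13 := rfl
  have k3 := incr_diff hr1 (u := x2 + x3) (v := x1 + x2 + x3) (w := x23)
    (by linarith) (by linarith) h23
  have e4 : x1 + x2 + x3 + x23 = x1 + x2 + x3 + x23 := rfl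
  have kc := core_ineq hr h1 h2 h3
  linarith
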